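/- Let L ≥ K ≥ 1 be integers and let w : [L] → [0, 1] satisfy w(1) ≥ w(2) ≥ … ≥ w(L). Let ŵ, θ, g, h : [L] → ℝ satisfy |ŵ(i) − w(i)| ≤ g(i) and |θ(i) − ŵ(i)| ≤ h(i) for all i ∈ [L]. For an ordered K-tuple S = (i_1, …, i_K) of distinct items define F(S) = Σ_{k=1}^K [∏_{j=1}^{k−1} (1 − w(i_j))] · (g(i_k) + h(i_k)). Let S_t = (i_1, …, i_K) be distinct items with θ(i_1) ≥ θ(i_2) ≥ … ≥ θ(i_K) ≥ θ(j) for every j ∉ S_t, and let S̃ be any ordered K-tuple of distinct items satisfying F(S̃) ≥ r(S* | w) − r(S̃ | w), where S* = (1, …, K). Then r(S* | w) − r(S_t | w) ≤ 2 F(S̃) + F(S_t). -/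

import Mathlib

/-- Telescoping bound over `range n`. -/
lemma key_aux (a b : ℕ → ℝ) (n : ℕ) (ha : ∀ k < n, 0 ≤ a k) (hb : ∀ k < n, |b k| ≤ 1) :
    |∏ k ∈ Finset.range n, a k - ∏ k ∈ Finset.range n, b k|
      ≤ ∑ k ∈ Finset.range n, (∏ j ∈ Finset.range k, a j) * |a k - b k| := by
  induction n with
  | zero => simp
  | succ n ih =>
    have ih' := ih (fun k hk => ha k (by omega)) (fun k hk => hb k (by omega))
    rw [Finset.prod_range_succ, Finset.prod_range_succ, Finset.sum_range_succ]
    have hA : (0:ℝ) ≤ ∏ j ∈ Finset.range n, a j :=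
      Finset.prod_nonneg fun j hj => ha j (by simpa using Finset.mem_range.mp hj |>.trans (Nat.lt_succ_self n))
    have h1 : (∏ k ∈ Finset.range n, a k) * a n - (∏ k ∈ Finset.range n, b k) * b n
        = (∏ k ∈ Finset.range n, a k - ∏ k ∈ Finset.range n, b k) * b n
          + (∏ k ∈ Finset.range n, a k) * (a n - b n) := by ring
    rw [h1]
    calc |(∏ k ∈ Finset.range n, a k - ∏ k ∈ Finset.range n, b k) * b n
          + (∏ k ∈ Finset.range n, a k) * (a n - b n)|
        ≤ |(∏ k ∈ Finset.range n, a k - ∏ k ∈ Finset.range n, b k) * b n|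
          + |(∏ k ∈ Finset.range n, a k) * (a n - b n)| := abs_add_le _ _
      _ = |∏ k ∈ Finset.range n, a k - ∏ k ∈ Finset.range n, b k| * |b n|
          + (∏ k ∈ Finset.range n, a k) * |a n - b n| := by
            rw [abs_mul, abs_mul, abs_of_nonneg hA]
      _ ≤ |∏ k ∈ Finset.range n, a k - ∏ k ∈ Finset.range n, b k| * 1
          + (∏ k ∈ Finset.range n, a k) * |a n - b n| :=
            add_le_add_left (mul_le_mul_of_nonneg_left (hb n (Nat.lt_succ_self n))
              (abs_nonneg _)) _
      _ ≤ (∑ k ∈ Finset.range n, (∏ j ∈ Finset.range k, a j) * |a k - b k|)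
          + (∏ j ∈ Finset.range n, a j) * |a n - b n| := by
            rw [mul_one]; gcongr

/-- Same bound, over `Fin K` with `Iio` prefix products. -/
lemma key_fin (K : ℕ) (a b : Fin K → ℝ) (ha : ∀ k, 0 ≤ a k) (hb : ∀ k, |b k| ≤ 1) :
    |(∏ k : Fin K, a k) - ∏ k : Fin K, b k|
      ≤ ∑ k : Fin K, (∏ j ∈ Finset.Iio k, a j) * |a k - b k| := by
  classical
  set a' : ℕ → ℝ := fun n => if h : n < K then a ⟨n, h⟩ else 0 with ha'
  set b' : ℕ → ℝ := fun n => if h : n < K then b ⟨n, h⟩ else 0 with hb'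
  have hIio : ∀ k : Fin K, ∏ j ∈ Finset.Iio k, a j = ∏ j ∈ Finset.range k.val, a' j := by
    intro k
    rw [← Nat.Iio_eq_range, ← Fin.map_valEmbedding_Iio, Finset.prod_map]
    refine Finset.prod_congr rfl fun j hj => ?_
    simp [a', j.isLt]
  have h1 : (∏ k : Fin K, a k) = ∏ k ∈ Finset.range K, a' k := by
    rw [← Fin.prod_univ_eq_prod_range]
    exact Finset.prod_congr rfl fun k _ => by simp [a', k.isLt]
  have h2 : (∏ k : Fin K, b k) = ∏ k ∈ Finset.range K, b' k := by
    rw [← Fin.prod_univ_eq_prod_range]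
    exact Finset.prod_congr rfl fun k _ => by simp [b', k.isLt]
  have h3 : (∑ k : Fin K, (∏ j ∈ Finset.Iio k, a j) * |a k - b k|)
      = ∑ k ∈ Finset.range K, (∏ j ∈ Finset.range k, a' j) * |a' k - b' k| := by
    rw [← Fin.sum_univ_eq_sum_range]
    refine Finset.sum_congr rfl fun k _ => ?_
    rw [hIio k]
    simp [a', b', k.isLt]
  rw [h1, h2, h3]
  exact key_aux a' b' K (fun k hk => by simp only [a', dif_pos hk]; exact ha _)
    (fun k hk => by simp only [b', dif_pos hk]; exact hb _)

/-- If `i` selects top-`K` items for `f`, its product of `(1 - f ·)` is smallest. -/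
lemma prod_top {L K : ℕ} (f : Fin L → ℝ) (hf : ∀ x, 0 ≤ f x ∧ f x ≤ 1)
    (i S : Fin K → Fin L) (hi : Function.Injective i) (hS : Function.Injective S)
    (hdom : ∀ j : Fin L, j ∉ Set.range i → ∀ k : Fin K, f j ≤ f (i k)) :
    (∏ k : Fin K, (1 - f (i k))) ≤ ∏ k : Fin K, (1 - f (S k)) := by
  classical
  set g : Fin L → ℝ := fun x => 1 - f x with hg
  have hg01 : ∀ x, 0 ≤ g x ∧ g x ≤ 1 := fun x => ⟨by simp [g]; linarith [(hf x).2],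
    by simp [g]; linarith [(hf x).1]⟩
  set I : Finset (Fin L) := Finset.image i Finset.univ with hI
  set T : Finset (Fin L) := Finset.image S Finset.univ with hT
  have hPi : (∏ k : Fin K, g (i k)) = ∏ x ∈ I, g x :=
    (Finset.prod_image (fun a _ b _ hab => hi hab)).symm
  have hPS : (∏ k : Fin K, g (S k)) = ∏ x ∈ T, g x :=
    (Finset.prod_image (fun a _ b _ hab => hS hab)).symm
  have hIcard : I.card = K := by
    rw [hI, Finset.card_image_of_injective _ hi, Finset.card_univ, Fintype.card_fin]
  have hTcard : T.card = K := by
    rw [hT, Finset.card_image_of_injective _ hS, Finset.card_univ, Fintype.card_fin]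
  have hsplitI : (∏ x ∈ I ∩ T, g x) * ∏ x ∈ I \ T, g x = ∏ x ∈ I, g x :=
    Finset.prod_inter_mul_prod_diff I T g
  have hsplitT : (∏ x ∈ T ∩ I, g x) * ∏ x ∈ T \ I, g x = ∏ x ∈ T, g x :=
    Finset.prod_inter_mul_prod_diff T I g
  have hcard : (I \ T).card = (T \ I).card := by
    have h1 := Finset.card_sdiff_add_card_inter I T
    have h2 := Finset.card_sdiff_add_card_inter T I
    rw [Finset.inter_comm] at h2
    omega
  -- key: product over I \ T ≤ product over T \ I
  have hkey : (∏ x ∈ I \ T, g x) ≤ ∏ x ∈ T \ I, g x := by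
    let e : (I \ T : Finset (Fin L)) ≃ (T \ I : Finset (Fin L)) := Finset.equivOfCardEq hcard
    have h1 : (∏ x ∈ I \ T, g x) = ∏ x : (T \ I : Finset (Fin L)), g (e.symm x) := by
      rw [← Finset.prod_coe_sort]
      exact (Equiv.prod_comp e.symm (fun y : (I \ T : Finset (Fin L)) => g y)).symm
    rw [h1]
    conv_rhs => rw [← Finset.prod_coe_sort]
    apply Finset.prod_le_prod
    · intro x _; exact (hg01 _).1
    · intro x _
      have hxI : (x : Fin L) ∉ I := (Finset.mem_sdiff.mp x.2).2
      have hx' : (x : Fin L) ∉ Set.range i := by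
        intro ⟨k, hk⟩
        exact hxI (Finset.mem_image.mpr ⟨k, Finset.mem_univ k, hk⟩)
      have hyI : ((e.symm x : Fin L)) ∈ I := (Finset.mem_sdiff.mp (e.symm x).2).1
      obtain ⟨k, _, hk⟩ := Finset.mem_image.mp hyI
      have hfle : f (x : Fin L) ≤ f ((e.symm x : Fin L)) := by
        have h2 := hdom x hx' k
        rw [hk] at h2
        exact h2
      simp only [g]
      linarith
  have hinter : (0:ℝ) ≤ ∏ x ∈ I ∩ T, g x := Finset.prod_nonneg fun x _ => (hg01 x).1
  calc (∏ k : Fin K, g (i k)) = (∏ x ∈ I ∩ T, g x) * ∏ x ∈ I \ T, g x := by rw [hPi, hsplitI]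
    _ ≤ (∏ x ∈ I ∩ T, g x) * ∏ x ∈ T \ I, g x := mul_le_mul_of_nonneg_left hkey hinter
    _ = ∏ k : Fin K, g (S k) := by rw [Finset.inter_comm] at hsplitT; rw [hsplitT, hPS]

lemma clamp_close (t u : ℝ) (h0 : 0 ≤ u) (h1 : u ≤ 1) :
    |max 0 (min 1 t) - u| ≤ |t - u| := by
  rcases le_total t 0 with ht | ht
  · rw [min_eq_right (ht.trans zero_le_one), max_eq_left ht,
      abs_of_nonpos (by linarith), abs_of_nonpos (by linarith)]
    linarith
  · rcases le_total 1 t with ht1 | ht1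
    · rw [min_eq_left ht1, max_eq_right zero_le_one,
        abs_of_nonneg (by linarith), abs_of_nonneg (by linarith)]
      linarith
    · rw [min_eq_right ht1, max_eq_right ht]

/-- (Deterministic core of Lemma 4 / gap-bound for TS-Cascade.)
With `F(S) = ∑_k [∏_{j<k} (1 - w(i_j))] (g(i_k) + h(i_k))`, if `S_t` is the greedy list for the
Thompson samples `θ` and `S̃` is any ordered `K`-tuple with `F(S̃) ≥ r(S*|w) - r(S̃|w)`, then
`r(S*|w) - r(S_t|w) ≤ 2 F(S̃) + F(S_t)`. -/
theorem stmt_4 (L K : ℕ) (hK : 1 ≤ K) (hKL : K ≤ L)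
    (w : Fin L → ℝ) (hw01 : ∀ j, 0 ≤ w j ∧ w j ≤ 1)
    (hmono : ∀ a b : Fin L, a ≤ b → w b ≤ w a)
    (wHat θ g h : Fin L → ℝ)
    (hg : ∀ j, |wHat j - w j| ≤ g j) (hh : ∀ j, |θ j - wHat j| ≤ h j)
    (F : (Fin K → Fin L) → ℝ)
    (hF : ∀ S : Fin K → Fin L,
      F S = ∑ k : Fin K, (∏ j ∈ Finset.Iio k, (1 - w (S j))) * (g (S k) + h (S k)))
    (i : Fin K → Fin L) (hi : Function.Injective i)
    (hsort : ∀ k l : Fin K, k ≤ l → θ (i l) ≤ θ (i k))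
    (htop : ∀ j : Fin L, j ∉ Set.range i → θ j ≤ θ (i ⟨K - 1, by omega⟩))
    (iTilde : Fin K → Fin L) (hiTilde : Function.Injective iTilde)
    (hS : (1 - ∏ k : Fin K, (1 - w (Fin.castLE hKL k))) - (1 - ∏ k : Fin K, (1 - w (iTilde k)))
      ≤ F iTilde) :
    (1 - ∏ k : Fin K, (1 - w (Fin.castLE hKL k))) - (1 - ∏ k : Fin K, (1 - w (i k)))
      ≤ 2 * F iTilde + F i := by
  classical
  set θc : Fin L → ℝ := fun x => max 0 (min 1 (θ x)) with hθc
  have hθc01 : ∀ x, 0 ≤ θc x ∧ θc x ≤ 1 := fun x =>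
    ⟨le_max_left _ _, max_le zero_le_one (min_le_left _ _)⟩
  have hgh : ∀ x, |θc x - w x| ≤ g x + h x := by
    intro x
    have h1 : |θ x - w x| ≤ g x + h x := by
      have := abs_sub_le (θ x) (wHat x) (w x)
      have := hg x; have := hh x; linarith [abs_sub_le (θ x) (wHat x) (w x)]
    exact (clamp_close (θ x) (w x) (hw01 x).1 (hw01 x).2).trans h1
  -- bound |prod under w - prod under θc| by F S, for any S
  have hbound : ∀ S : Fin K → Fin L,
      |(∏ k : Fin K, (1 - w (S k))) - ∏ k : Fin K, (1 - θc (S k))| ≤ F S := by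
    intro S
    rw [hF]
    refine (key_fin K (fun k => 1 - w (S k)) (fun k => 1 - θc (S k))
      (fun k => by linarith [(hw01 (S k)).2])
      (fun k => abs_le.mpr ⟨by linarith [(hθc01 (S k)).2],
        by linarith [(hθc01 (S k)).1]⟩)).trans ?_
    apply Finset.sum_le_sum
    intro k _
    have hp : (0:ℝ) ≤ ∏ j ∈ Finset.Iio k, (1 - w (S j)) :=
      Finset.prod_nonneg fun j _ => by linarith [(hw01 (S j)).2]
    have : |(1 - w (S k)) - (1 - θc (S k))| = |θc (S k) - w (S k)| := by
      rw [show (1 - w (S k)) - (1 - θc (S k)) = θc (S k) - w (S k) by ring]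
    rw [this]
    exact mul_le_mul_of_nonneg_left (hgh (S k)) hp
  -- greedy optimality under θc
  have hmid : (∏ k : Fin K, (1 - θc (i k))) ≤ ∏ k : Fin K, (1 - θc (iTilde k)) := by
    apply prod_top θc hθc01 i iTilde hi hiTilde
    intro j hj k
    have h1 : θ j ≤ θ (i ⟨K - 1, by omega⟩) := htop j hj
    have h2 : θ (i ⟨K - 1, by omega⟩) ≤ θ (i k) := by
      apply hsort
      rw [Fin.le_def]
      have := k.isLt
      simp only []
      omega
    have h3 : θ j ≤ θ (i k) := h1.trans h2
    exact max_le_max le_rfl (min_le_min le_rfl h3)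
  have hb1 := abs_le.mp (hbound i)
  have hb2 := abs_le.mp (hbound iTilde)
  linarith [hb1.1, hb1.2, hb2.1, hb2.2]
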